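/- For reduced cyclic words V and W, the set LP₂(V,W) of linked pairs of V and W contains at most len(V)·len(W) elements. -/

import Mathlib

/-!
Combinatorial model of the Goldman–Turaev Lie bialgebra of curves on a surface
with boundary, following M. Chas, "Combinatorial Lie bialgebras of curves on
surfaces".

The alphabet `𝔸ₙ = {a₁,…,aₙ, ā₁,…,āₙ}` is modelled by `Letter n := Fin n × Bool`,
with the bar involution flipping the boolean.  Linear words are lists of letters;
a cyclic word is a list up to rotation (`List.IsRotated`).
-/

open List

abbrev Letter (n : ℕ) := Fin n × Bool

namespace ChasCW

variable {n : ℕ}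

/-- The bar involution `x ↦ x̄` on letters. -/
def bar (x : Letter n) : Letter n := (x.1, !x.2)

/-- The formal inverse `W̄` of a linear word `W`. -/
def wordInv (w : List (Letter n)) : List (Letter n) := (w.map bar).reverse

/-- A linear word is freely reduced if no letter is followed by its inverse. -/
def Reduced (w : List (Letter n)) : Prop := w.Chain' (fun a b => b ≠ bar a)

/-- A nonempty word all of whose cyclic rotations are freely reduced:
a representative of a reduced cyclic word. -/
def CyclicallyReduced (w : List (Letter n)) : Prop :=
  w ≠ [] ∧ ∀ i, Reduced (w.rotate i)

/-- The type of cyclic words: lists of letters up to rotation. -/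
abbrev CWord (n : ℕ) := Quotient (List.IsRotated.setoid (Letter n))

/-- The cyclic word `c(w)` determined by a linear word `w`. -/
def cw (w : List (Letter n)) : CWord n := Quotient.mk _ w

/-- A surface symbol: a reduced cyclic word containing every letter of the
alphabet exactly once. -/
def SurfaceSymbol (O : List (Letter n)) : Prop :=
  CyclicallyReduced O ∧ ∀ x : Letter n, O.count x = 1

/-- `w` embeds injectively and orientation-preservingly as a cyclic subsequence
of the cyclic word `O`. -/
def CyclicEmbeds (w O : List (Letter n)) : Prop :=
  w.Nodup ∧ ∃ i ≤ w.length, ∃ j ≤ O.length, (w.rotate i).Sublist (O.rotate j)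

open Classical in
/-- The orientation `o(w) ∈ {-1,0,1}` of a cyclic word relative to the surface
symbol `O`: `1` for an orientation-preserving embedding of rings, `-1` for an
orientation-reversing one, `0` otherwise. -/
noncomputable def orient (O w : List (Letter n)) : ℤ :=
  if CyclicEmbeds w O then 1 else if CyclicEmbeds w O.reverse then -1 else 0

/-- Case (1) of Definition 2.1: `P = p₁p₂`, `Q = q₁q₂` and
`o(c(p̄₁q̄₁p₂q₂)) ≠ 0`. -/
def Linked1 (O : List (Letter n)) (p₁ p₂ q₁ q₂ : Letter n) : Prop :=
  Reduced [p₁, p₂] ∧ Reduced [q₁, q₂] ∧ orient O [bar p₁, bar q₁, p₂, q₂] ≠ 0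

/-- Case (2) of Definition 2.1: `P = p₁Yp₂`, `Q = q₁Yq₂`, `p₁ ≠ q₁`, `p₂ ≠ q₂`,
`Y = x₁X x₂` nonempty, and `o(c(p̄₁q̄₁x₁)) = o(c(p₂q₂x̄₂))`. -/
def Linked2 (O : List (Letter n)) (p₁ p₂ q₁ q₂ x₁ x₂ : Letter n)
    (Y : List (Letter n)) : Prop :=
  Y ≠ [] ∧ Y.head? = some x₁ ∧ Y.getLast? = some x₂ ∧
  p₁ ≠ q₁ ∧ p₂ ≠ q₂ ∧
  Reduced (p₁ :: (Y ++ [p₂])) ∧ Reduced (q₁ :: (Y ++ [q₂])) ∧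
  orient O [bar p₁, bar q₁, x₁] = orient O [p₂, q₂, bar x₂]

/-- Case (3) of Definition 2.1: `P = p₁Yp₂`, `Q = q₁Ȳq₂`, `p₁ ≠ q̄₂`, `p₂ ≠ q̄₁`,
`Y = x₁X x₂` nonempty, and `o(c(q₂p̄₁x₁)) = o(c(q̄₁p₂x̄₂))`. -/
def Linked3 (O : List (Letter n)) (p₁ p₂ q₁ q₂ x₁ x₂ : Letter n)
    (Y : List (Letter n)) : Prop :=
  Y ≠ [] ∧ Y.head? = some x₁ ∧ Y.getLast? = some x₂ ∧
  p₁ ≠ bar q₂ ∧ p₂ ≠ bar q₁ ∧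
  Reduced (p₁ :: (Y ++ [p₂])) ∧ Reduced (q₁ :: (wordInv Y ++ [q₂])) ∧
  orient O [q₂, bar p₁, x₁] = orient O [bar q₁, p₂, bar x₂]

/-- `(P,Q)` is an `O`-linked pair (Definition 2.1). -/
def LinkedPair (O P Q : List (Letter n)) : Prop :=
  (∃ p₁ p₂ q₁ q₂, P = [p₁, p₂] ∧ Q = [q₁, q₂] ∧ Linked1 O p₁ p₂ q₁ q₂) ∨
  (∃ p₁ p₂ q₁ q₂ x₁ x₂ Y, P = p₁ :: (Y ++ [p₂]) ∧ Q = q₁ :: (Y ++ [q₂]) ∧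
    Linked2 O p₁ p₂ q₁ q₂ x₁ x₂ Y) ∨
  (∃ p₁ p₂ q₁ q₂ x₁ x₂ Y, P = p₁ :: (Y ++ [p₂]) ∧ Q = q₁ :: (wordInv Y ++ [q₂]) ∧
    Linked3 O p₁ p₂ q₁ q₂ x₁ x₂ Y)

/-- The sign of a linked pair `(P,Q)`, computed from the (unique) decomposition
of `P` and `Q` prescribed by Definition 2.1. -/
noncomputable def signLP (O P Q : List (Letter n)) : ℤ :=
  match P, Q with
  | p₁ :: P', q₁ :: Q' =>
    match P'.getLast?, Q'.getLast? with
    | some p₂, some q₂ =>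
      let Y := P'.dropLast
      let Z := Q'.dropLast
      if Y = [] then orient O [bar p₁, bar q₁, p₂, q₂]
      else
        match Y.head?, Y.getLast? with
        | some x₁, some _ =>
          if Z = wordInv Y then orient O [q₂, bar p₁, x₁]
          else orient O [bar p₁, bar q₁, x₁]
        | _, _ => 0
    | _, _ => 0
  | _, _ => 0

/-- The subword of length `l` of (a large power of) the cyclic word `V`,
starting at position `i`.  This encodes occurrences of subwords of powers
of `V`. -/
def segment (V : List (Letter n)) (i l : ℕ) : List (Letter n) :=
  (((List.replicate (l + 1) V).flatten).rotate i).take l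

/-- The set `LP₁(W)` of linked pairs of occurrences of subwords of `W`,
an occurrence being encoded by its starting position and its length. -/
def LP1 (O W : List (Letter n)) : Set ((ℕ × ℕ) × (ℕ × ℕ)) :=
  {e | e.1.1 < W.length ∧ e.2.1 < W.length ∧ e.1.2 ≤ W.length ∧ e.2.2 ≤ W.length ∧
    LinkedPair O (segment W e.1.1 e.1.2) (segment W e.2.1 e.2.2)}

/-- The set `LP₂(V,W)` of linked pairs of the pair of cyclic words `(V,W)`:
pairs of occurrences of subwords of powers of `V` resp. `W` which are linked.
(The normalization `len V^{j-1} < len P ≤ len V^j` is implicit in the encoding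
of an occurrence by a starting position `< len V` and a length.) -/
def LP2 (O V W : List (Letter n)) : Set ((ℕ × ℕ) × (ℕ × ℕ)) :=
  {e | e.1.1 < V.length ∧ e.2.1 < W.length ∧
    LinkedPair O (segment V e.1.1 e.1.2) (segment W e.2.1 e.2.2)}

end ChasCW

namespace ChasCW

variable {n : ℕ}

/-! ### Auxiliary lemmas for the counting argument -/

lemma bar_bar (x : Letter n) : bar (bar x) = x := by simp [bar]

lemma bar_ne (x : Letter n) : bar x ≠ x := by
  simp only [bar, ne_eq, Prod.ext_iff]
  intro h; exact (Bool.not_ne_self x.2) h.2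

lemma flatten_replicate_getD (V : List (Letter n)) (d : Letter n) (m t : ℕ)
    (ht : t < m * V.length) :
    ((List.replicate m V).flatten).getD t d = V.getD (t % V.length) d := by
  induction m generalizing t with
  | zero => omega
  | succ m ih =>
    rw [List.replicate_succ, List.flatten_cons]
    by_cases h : t < V.length
    · rw [List.getD_append _ _ _ _ h, Nat.mod_eq_of_lt h]
    · push_neg at h
      have hm : (m + 1) * V.length = m * V.length + V.length := by ring
      rw [List.getD_append_right _ _ _ _ h, ih _ (by omega),
        ← Nat.mod_eq_sub_mod h]

lemma length_flatten_replicate (V : List (Letter n)) (m : ℕ) :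
    ((List.replicate m V).flatten).length = m * V.length := by
  simp [List.length_flatten]

lemma segment_length (V : List (Letter n)) (hv : V ≠ []) (i l : ℕ) :
    (segment V i l).length = l := by
  have h0 : 0 < V.length := List.length_pos_iff.2 hv
  rw [segment, List.length_take, List.length_rotate, length_flatten_replicate]
  have : l ≤ (l+1) * V.length := by nlinarith
  omega

lemma segment_getD (V : List (Letter n)) (hv : V ≠ []) (d : Letter n)
    (i l j : ℕ) (hj : j < l) :
    (segment V i l).getD j d = V.getD ((i + j) % V.length) d := by
  have h0 : 0 < V.length := List.length_pos_iff.2 hv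
  have hflen : ((List.replicate (l+1) V).flatten).length = (l+1) * V.length :=
    length_flatten_replicate V (l+1)
  have hll : l < (l+1) * V.length := by nlinarith
  have hj2 : j < ((List.replicate (l+1) V).flatten).length := by omega
  rw [segment,
    List.getD_eq_getElem _ _ (by rw [List.length_take, List.length_rotate]; omega),
    List.getElem_take, List.getElem_rotate,
    ← List.getD_eq_getElem _ d,
    flatten_replicate_getD V d (l+1) _ (by
      have := Nat.mod_lt (j + i) (show 0 < ((List.replicate (l+1) V).flatten).length by omega)
      omega)]
  congr 1
  rw [hflen, Nat.mod_mod_of_dvd _ ⟨l+1, by ring⟩, Nat.add_comm]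

lemma decode (V : List (Letter n)) (hv : V ≠ []) (d : Letter n) {i l : ℕ}
    {P : List (Letter n)} (h : segment V i l = P) :
    ∀ j < l, V.getD ((i + j) % V.length) d = P.getD j d := by
  intro j hj
  rw [← segment_getD V hv d i l j hj, h]

lemma stream_reduced_aux (W : List (Letter n)) (hW : CyclicallyReduced W)
    (d : Letter n) (a : ℕ) (haw : a < W.length) :
    W.getD ((a+1) % W.length) d ≠ bar (W.getD a d) := by
  have hw0 : 0 < W.length := List.length_pos_iff.2 hW.1
  rcases Nat.lt_or_ge 1 W.length with h2 | h1
  · have hred := hW.2 a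
    change List.IsChain _ _ at hred
    rw [List.isChain_iff_getElem] at hred
    have h := hred 0 (by rw [List.length_rotate]; omega)
    simp only [List.get_eq_getElem, List.getElem_rotate, Nat.zero_add] at h
    have e1 : (1 + a) % W.length = (a + 1) % W.length := by rw [Nat.add_comm]
    have e2 : a % W.length = a := Nat.mod_eq_of_lt haw
    simp only [e1, e2] at h
    rw [List.getD_eq_getElem _ _ (Nat.mod_lt _ hw0), List.getD_eq_getElem _ _ haw]
    exact h
  · have hw1 : W.length = 1 := by omega
    have ha0 : a = 0 := by omega
    subst ha0
    simp only [hw1, Nat.mod_self, Nat.zero_add]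
    intro h; exact bar_ne _ h.symm

lemma stream_reduced (W : List (Letter n)) (hW : CyclicallyReduced W)
    (d : Letter n) (t : ℕ) :
    W.getD ((t+1) % W.length) d ≠ bar (W.getD (t % W.length) d) := by
  have hw0 : 0 < W.length := List.length_pos_iff.2 hW.1
  have hmod : (t+1) % W.length = (t % W.length + 1) % W.length := by
    conv_lhs => rw [← Nat.mod_add_div t W.length]
    rw [Nat.add_right_comm, Nat.add_mul_mod_self_left]
  rw [hmod]
  exact stream_reduced_aux W hW d (t % W.length) (Nat.mod_lt _ hw0)

lemma wordInv_length (Y : List (Letter n)) : (wordInv Y).length = Y.length := by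
  simp [wordInv]

lemma wordInv_getD (Y : List (Letter n)) (d : Letter n) {j : ℕ} (hj : j < Y.length) :
    (wordInv Y).getD j d = bar (Y.getD (Y.length - 1 - j) d) := by
  have h1 : j < (wordInv Y).length := by rw [wordInv_length]; exact hj
  have h2 : Y.length - 1 - j < Y.length := by omega
  rw [List.getD_eq_getElem _ _ h1, List.getD_eq_getElem _ _ h2]
  simp only [wordInv, List.getElem_reverse, List.getElem_map, List.length_map]

lemma decomp_facts (V : List (Letter n)) (hv : V ≠ []) (d : Letter n)
    {i l : ℕ} {p₁ p₂ : Letter n} {Y : List (Letter n)}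
    (h : segment V i l = p₁ :: (Y ++ [p₂])) :
    l = Y.length + 2 ∧
    V.getD (i % V.length) d = p₁ ∧
    (∀ j < Y.length, V.getD ((i+1+j) % V.length) d = Y.getD j d) ∧
    V.getD ((i+1+Y.length) % V.length) d = p₂ := by
  have hl : l = Y.length + 2 := by
    have := congrArg List.length h
    rw [segment_length V hv] at this
    simp at this; omega
  refine ⟨hl, ?_, ?_, ?_⟩
  · have := decode V hv d h 0 (by omega)
    simpa using this
  · intro j hj
    have := decode V hv d h (1+j) (by omega)
    rw [show i + (1+j) = i+1+j by omega] at this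
    rw [show (1:ℕ)+j = j+1 by omega, List.getD_cons_succ,
      List.getD_append _ _ _ _ hj] at this
    exact this
  · have := decode V hv d h (1+Y.length) (by omega)
    rw [show i + (1+Y.length) = i+1+Y.length by omega] at this
    rw [show (1:ℕ)+Y.length = Y.length+1 by omega, List.getD_cons_succ,
      List.getD_append_right _ _ _ _ (le_refl _)] at this
    simpa using this

lemma decomp_facts2 (V : List (Letter n)) (hv : V ≠ []) (d : Letter n)
    {i l : ℕ} {p₁ p₂ : Letter n}
    (h : segment V i l = [p₁, p₂]) :
    l = 2 ∧ V.getD (i % V.length) d = p₁ ∧ V.getD ((i+1) % V.length) d = p₂ := by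
  have h' : segment V i l = p₁ :: (([] : List (Letter n)) ++ [p₂]) := by simpa using h
  obtain ⟨h1, h2, _, h4⟩ := decomp_facts V hv d h'
  exact ⟨by simpa using h1, h2, by simpa using h4⟩

/-- The periodic stream of letters determined by the cyclic word `V`. -/
abbrev strm (V : List (Letter n)) (d : Letter n) (t : ℕ) : Letter n :=
  V.getD (t % V.length) d

lemma strm_congr (V : List (Letter n)) (d : Letter n) {a b : ℕ}
    (h : a % V.length = b % V.length) : strm V d a = strm V d b := by
  simp only [strm, h]

lemma strm_reduced (W : List (Letter n)) (hW : CyclicallyReduced W)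
    (d : Letter n) (t : ℕ) : strm W d (t+1) ≠ bar (strm W d t) :=
  stream_reduced W hW d t

/-- Stream facts for a pair of starting positions corresponding to a linked pair
of type (1). -/
abbrev F1 (V W : List (Letter n)) (d : Letter n) (i k : ℕ) : Prop :=
  strm V d (i+1) ≠ strm W d (k+1) ∧ strm V d (i+1) ≠ bar (strm W d k)

/-- Stream facts for a linked pair of type (2). -/
abbrev F2 (V W : List (Letter n)) (d : Letter n) (i k L : ℕ) : Prop :=
  (∀ j < L, strm V d (i+1+j) = strm W d (k+1+j)) ∧
  strm V d (i+1+L) ≠ strm W d (k+1+L)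

/-- Stream facts for a linked pair of type (3). -/
abbrev F3 (V W : List (Letter n)) (d : Letter n) (i k L : ℕ) : Prop :=
  (∀ r < L, strm V d (i+1+r) = bar (strm W d (k+(L-r)))) ∧
  strm V d (i+1+L) ≠ bar (strm W d k)

/-- The given pair of occurrences is linked of type (3). -/
abbrev T3pred (O V W : List (Letter n)) (e : (ℕ × ℕ) × (ℕ × ℕ)) : Prop :=
  ∃ p₁ p₂ q₁ q₂ x₁ x₂ Y, segment V e.1.1 e.1.2 = p₁ :: (Y ++ [p₂]) ∧
    segment W e.2.1 e.2.2 = q₁ :: (wordInv Y ++ [q₂]) ∧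
    Linked3 O p₁ p₂ q₁ q₂ x₁ x₂ Y

open Classical in
/-- The pair of two-letter occurrences (a "slot") assigned to a linked pair:
an injective map witnessing the counting bound. -/
noncomputable def slot (O V W : List (Letter n)) (e : (ℕ × ℕ) × (ℕ × ℕ)) : ℕ × ℕ :=
  (e.1.1, if T3pred O V W e then (e.2.1 + (e.1.2 - 2)) % W.length
    else e.2.1 % W.length)

lemma T3_facts (O V W : List (Letter n)) (hv : V ≠ []) (hw : W ≠ [])
    (d : Letter n) {i l k m : ℕ} (h : T3pred O V W ((i,l),(k,m))) :
    ∃ L, 0 < L ∧ l = L + 2 ∧ m = L + 2 ∧ F3 V W d i k L := by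
  obtain ⟨p₁,p₂,q₁,q₂,x₁,x₂,Y,hP,hQ,h3⟩ := h
  obtain ⟨hYne, -, -, -, hc2, -, -, -⟩ := h3
  obtain ⟨hl, hVi, hVrun, hVend⟩ := decomp_facts V hv d hP
  obtain ⟨hm, hWk, hWrun, hWend⟩ := decomp_facts W hw d hQ
  have hL : 0 < Y.length := List.length_pos_iff.2 hYne
  rw [wordInv_length] at hm hWrun
  refine ⟨Y.length, hL, hl, hm, ?_, ?_⟩
  · intro r hr
    have h1 : strm V d (i+1+r) = Y.getD r d := hVrun r hr
    have h2 := hWrun (Y.length - 1 - r) (by omega)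
    rw [wordInv_getD Y d (by omega), show Y.length - 1 - (Y.length - 1 - r) = r by omega] at h2
    have h4 : strm W d (k + (Y.length - r)) = bar (Y.getD r d) := by
      rw [show k + (Y.length - r) = k+1+(Y.length - 1 - r) by omega]
      exact h2
    rw [h1, h4, bar_bar]
  · show strm V d (i+1+Y.length) ≠ bar (strm W d k)
    rw [show strm V d (i+1+Y.length) = p₂ from hVend,
      show strm W d k = q₁ from hWk]
    exact hc2

lemma notT3_facts (O V W : List (Letter n)) (hv : V ≠ []) (hw : W ≠ [])
    (d : Letter n) {i l k m : ℕ}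
    (hlp : LinkedPair O (segment V i l) (segment W k m))
    (h : ¬ T3pred O V W ((i,l),(k,m))) :
    (l = 2 ∧ m = 2 ∧ F1 V W d i k) ∨
    (∃ L, 0 < L ∧ l = L + 2 ∧ m = L + 2 ∧ F2 V W d i k L) := by
  rcases hlp with ⟨p₁,p₂,q₁,q₂,hP,hQ,h1⟩ | ⟨p₁,p₂,q₁,q₂,x₁,x₂,Y,hP,hQ,h2⟩ |
    ⟨p₁,p₂,q₁,q₂,x₁,x₂,Y,hP,hQ,h3⟩
  · left
    obtain ⟨hl, hVi, hVi1⟩ := decomp_facts2 V hv d hP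
    obtain ⟨hm, hWk, hWk1⟩ := decomp_facts2 W hw d hQ
    obtain ⟨-, -, hor⟩ := h1
    have hnd : ([bar p₁, bar q₁, p₂, q₂] : List (Letter n)).Nodup := by
      unfold orient at hor
      split_ifs at hor with hce1 hce2
      · exact hce1.1
      · exact hce2.1
      · exact absurd rfl hor
    obtain ⟨-, hnd2⟩ := List.nodup_cons.1 hnd
    obtain ⟨hq1mem, hnd3⟩ := List.nodup_cons.1 hnd2
    obtain ⟨hp2mem, -⟩ := List.nodup_cons.1 hnd3
    have h23 : bar q₁ ≠ p₂ := fun hh => hq1mem (by rw [hh]; exact List.mem_cons_self)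
    have h34 : p₂ ≠ q₂ := fun hh => hp2mem (by rw [hh]; exact List.mem_cons_self)
    refine ⟨hl, hm, ?_, ?_⟩
    · rw [show strm V d (i+1) = p₂ from hVi1, show strm W d (k+1) = q₂ from hWk1]
      exact h34
    · rw [show strm V d (i+1) = p₂ from hVi1, show strm W d k = q₁ from hWk]
      exact fun hh => h23 hh.symm
  · right
    obtain ⟨hYne, -, -, -, hq2, -, -, -⟩ := h2
    obtain ⟨hl, hVi, hVrun, hVend⟩ := decomp_facts V hv d hP
    obtain ⟨hm, hWk, hWrun, hWend⟩ := decomp_facts W hw d hQ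
    refine ⟨Y.length, List.length_pos_iff.2 hYne, hl, hm,
      fun j hj => (hVrun j hj).trans (hWrun j hj).symm, ?_⟩
    rw [show strm V d (i+1+Y.length) = p₂ from hVend,
      show strm W d (k+1+Y.length) = q₂ from hWend]
    exact hq2
  · exact absurd ⟨p₁,p₂,q₁,q₂,x₁,x₂,Y,hP,hQ,h3⟩ h

lemma slot_injOn (O V W : List (Letter n))
    (hV : CyclicallyReduced V) (hW : CyclicallyReduced W) :
    Set.InjOn (slot O V W) (LP2 O V W) := by
  classical
  have hv := hV.1
  have hw := hW.1
  have hw0 : 0 < W.length := List.length_pos_iff.2 hw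
  set d : Letter n := V.head hv with hd
  intro e he e' he' hfe
  obtain ⟨⟨i,l⟩,k,m⟩ := e
  obtain ⟨⟨i',l'⟩,k',m'⟩ := e'
  obtain ⟨hi, hk, hlp⟩ := he
  obtain ⟨hi', hk', hlp'⟩ := he'
  simp only at hi hk hlp hi' hk' hlp'
  by_cases h3 : T3pred O V W ((i,l),(k,m)) <;>
    by_cases h3' : T3pred O V W ((i',l'),(k',m'))
  · -- both type 3
    simp only [slot, h3, h3', if_true, Prod.mk.injEq] at hfe
    obtain ⟨hfi, hfs⟩ := hfe
    obtain ⟨L, hL, hl, hm, hrun, hcor⟩ := T3_facts O V W hv hw d h3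
    obtain ⟨L', hL', hl', hm', hrun', hcor'⟩ := T3_facts O V W hv hw d h3'
    rw [show l - 2 = L by omega, show l' - 2 = L' by omega] at hfs
    rcases lt_trichotomy L L' with hc | hc | hc
    · exfalso
      have h1 := hrun' L (by omega)
      rw [← hfi] at h1
      have h2 : strm W d (k' + (L' - L)) = strm W d k := strm_congr W d (by
        have he2 : (k' + (L' - L)) + L = k' + L' := by omega
        exact Nat.ModEq.add_right_cancel' (n := W.length) L
          (show ((k' + (L' - L)) + L) % W.length = (k + L) % W.length by
            rw [he2]; exact hfs.symm))
      rw [h2] at h1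
      exact hcor h1
    · subst hc
      have hkk : k = k' := by
        have := Nat.ModEq.add_right_cancel' (n := W.length) L hfs
        rwa [Nat.ModEq, Nat.mod_eq_of_lt hk, Nat.mod_eq_of_lt hk'] at this
      have hll : l = l' := by omega
      have hmm : m = m' := by omega
      subst hfi hkk hll hmm
      rfl
    · exfalso
      have h1 := hrun L' (by omega)
      have h2 : strm W d (k + (L - L')) = strm W d k' := strm_congr W d (by
        have he2 : (k + (L - L')) + L' = k + L := by omega
        exact Nat.ModEq.add_right_cancel' (n := W.length) L'
          (show ((k + (L - L')) + L') % W.length = (k' + L') % W.length by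
            rw [he2]; exact hfs))
      rw [h2, hfi] at h1
      exact hcor' h1
  · -- e type 3, e' not
    exfalso
    simp only [slot, h3, h3', if_true, if_false, Prod.mk.injEq] at hfe
    obtain ⟨hfi, hfs⟩ := hfe
    obtain ⟨L, hL, hl, hm, hrun, hcor⟩ := T3_facts O V W hv hw d h3
    rw [show l - 2 = L by omega, Nat.mod_eq_of_lt hk'] at hfs
    have hx : strm V d (i+1) = bar (strm W d k') := by
      have h1 := hrun 0 (by omega)
      simp only [Nat.add_zero, Nat.sub_zero] at h1
      rw [strm_congr W d (show (k+L) % W.length = k' % W.length by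
        rw [hfs, Nat.mod_eq_of_lt hk'])] at h1
      exact h1
    rw [hfi] at hx
    rcases notT3_facts O V W hv hw d hlp' h3' with ⟨hl', hm', hA, hB⟩ |
      ⟨L', hL', hl', hm', hrun', hcor'⟩
    · exact hB hx
    · have h1 := hrun' 0 hL'
      simp only [Nat.add_zero] at h1
      exact strm_reduced W hW d k' (h1.symm.trans hx)
  · -- e not type 3, e' type 3
    exfalso
    simp only [slot, h3, h3', if_true, if_false, Prod.mk.injEq] at hfe
    obtain ⟨hfi, hfs⟩ := hfe
    obtain ⟨L', hL', hl', hm', hrun', hcor'⟩ := T3_facts O V W hv hw d h3'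
    rw [show l' - 2 = L' by omega, Nat.mod_eq_of_lt hk] at hfs
    have hx : strm V d (i'+1) = bar (strm W d k) := by
      have h1 := hrun' 0 (by omega)
      simp only [Nat.add_zero, Nat.sub_zero] at h1
      rw [strm_congr W d (show (k'+L') % W.length = k % W.length by
        rw [← hfs, Nat.mod_eq_of_lt hk])] at h1
      exact h1
    rw [← hfi] at hx
    rcases notT3_facts O V W hv hw d hlp h3 with ⟨hl, hm, hA, hB⟩ |
      ⟨L, hL, hl, hm, hrun, hcor⟩
    · exact hB hx
    · have h1 := hrun 0 hL
      simp only [Nat.add_zero] at h1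
      exact strm_reduced W hW d k (h1.symm.trans hx)
  · -- neither type 3
    simp only [slot, h3, h3', if_false, Prod.mk.injEq] at hfe
    obtain ⟨hfi, hfs⟩ := hfe
    rw [Nat.mod_eq_of_lt hk, Nat.mod_eq_of_lt hk'] at hfs
    subst hfi hfs
    rcases notT3_facts O V W hv hw d hlp h3 with ⟨hl, hm, hA, hB⟩ |
      ⟨L, hL, hl, hm, hrun, hcor⟩ <;>
      rcases notT3_facts O V W hv hw d hlp' h3' with ⟨hl', hm', hA', hB'⟩ |
        ⟨L', hL', hl', hm', hrun', hcor'⟩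
    · subst hl hm; rw [hl', hm']
    · exfalso
      have h1 := hrun' 0 hL'
      simp only [Nat.add_zero] at h1
      exact hA h1
    · exfalso
      have h1 := hrun 0 hL
      simp only [Nat.add_zero] at h1
      exact hA' h1
    · rcases lt_trichotomy L L' with hc | hc | hc
      · exact absurd (hrun' L hc) hcor
      · subst hc
        have hll : l = l' := by omega
        have hmm : m = m' := by omega
        rw [hll, hmm]
      · exact absurd (hrun L' hc) hcor'

/-- Proposition 2.7(a): for reduced cyclic words `V` and `W`, the
set `LP₂(V,W)` of linked pairs of `V` and `W` is finite and has at most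
`len V · len W` elements. -/
theorem LP2_card_le {n : ℕ} (O V W : List (Letter n))
    (hO : SurfaceSymbol O) (hV : CyclicallyReduced V) (hW : CyclicallyReduced W) :
    (LP2 O V W).Finite ∧ (LP2 O V W).ncard ≤ V.length * W.length := by
  classical
  have hw0 : 0 < W.length := List.length_pos_iff.2 hW.1
  set t : Set (ℕ × ℕ) := ↑(Finset.range V.length ×ˢ Finset.range W.length) with ht
  have hmaps : ∀ e ∈ LP2 O V W, slot O V W e ∈ t := by
    intro e he
    obtain ⟨hi, hk, -⟩ := he
    simp only [ht, Finset.coe_product, Set.mem_prod, Finset.mem_coe,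
      Finset.mem_range]
    constructor
    · exact hi
    · simp only [slot]
      split_ifs <;> exact Nat.mod_lt _ hw0
  have hinj := slot_injOn O V W hV hW
  have htfin : t.Finite := (Finset.range V.length ×ˢ Finset.range W.length).finite_toSet
  constructor
  · refine Set.Finite.of_finite_image (htfin.subset ?_) hinj
    rintro _ ⟨x, hx, rfl⟩
    exact hmaps x hx
  · have hle := Set.ncard_le_ncard_of_injOn (slot O V W) hmaps hinj htfin
    rwa [ht, Set.ncard_coe_finset, Finset.card_product, Finset.card_range,
      Finset.card_range] at hle

end ChasCW
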